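/- Let G be a 2-connected signed graph with a 2-separation (G₁, G₂), V(G₁) ∩ V(G₂) = {u, v}, and e₁, e₂ ∈ E(G₁). If every edge of G₂ is positive, then e₁ and e₂ are tied in G if and only if they are tied in G₁⁺, where G₁⁺ is G₁ with a positive edge uv added. -/

import Mathlib

/-- A finite loopless signed multigraph. -/
structure SGraph : Type 1 where
  V : Type
  E : Type
  [fintV : Fintype V]
  [decV : DecidableEq V]
  [fintE : Fintype E]
  [decE : DecidableEq E]
  ends : E → Sym2 V
  loopless : ∀ e, ¬ (ends e).IsDiag
  sgn : E → ℤˣ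

attribute [instance] SGraph.fintV SGraph.decV SGraph.fintE SGraph.decE

namespace SGraph

variable (G : SGraph)

/-- Degree of a vertex in an edge set. -/
noncomputable def deg (S : Set G.E) (v : G.V) : ℕ := {e ∈ S | v ∈ G.ends e}.ncard

/-- The sign of an edge set: the product of the signs of its edges. -/
noncomputable def signOf (S : Set G.E) : ℤˣ := ∏ᶠ e ∈ S, G.sgn e

/-- An edge set is connected: any two of its edges are linked by a chain of
edges of the set, consecutive ones sharing a vertex. -/
def conn (S : Set G.E) : Prop :=
  ∀ e ∈ S, ∀ f ∈ S,
    Relation.ReflTransGen (fun a b => a ∈ S ∧ b ∈ S ∧ ∃ v, v ∈ G.ends a ∧ v ∈ G.ends b) e f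

/-- An edge set is (the edge set of) a cycle: nonempty, every vertex has degree 0 or 2,
and it is connected. -/
def IsCycle (S : Set G.E) : Prop :=
  S.Nonempty ∧ (∀ v, G.deg S v = 0 ∨ G.deg S v = 2) ∧ G.conn S

/-- The vertices covered by an edge set. -/
def verts (S : Set G.E) : Set G.V := {v | ∃ e ∈ S, v ∈ G.ends e}

/-- Two edges are untied: there are cycles of both signs through both edges. -/
def Untied (e₁ e₂ : G.E) : Prop :=
  (∃ C, G.IsCycle C ∧ e₁ ∈ C ∧ e₂ ∈ C ∧ G.signOf C = 1) ∧
  (∃ C, G.IsCycle C ∧ e₁ ∈ C ∧ e₂ ∈ C ∧ G.signOf C = -1)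

/-- Two edges are tied: all cycles through both have the same sign. -/
def Tied (e₁ e₂ : G.E) : Prop :=
  ∀ C C', G.IsCycle C → G.IsCycle C' → e₁ ∈ C → e₂ ∈ C → e₁ ∈ C' → e₂ ∈ C' →
    G.signOf C = G.signOf C'

/-- A signed graph is balanced if every cycle is positive. -/
def Balanced : Prop := ∀ C, G.IsCycle C → G.signOf C = 1

/-- Reachability between vertices avoiding a forbidden vertex set `S`. -/
def ReachOutside (S : Set G.V) : G.V → G.V → Prop :=
  Relation.ReflTransGen (fun a b => a ∉ S ∧ b ∉ S ∧ ∃ e, G.ends e = s(a, b))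

/-- The graph minus the vertex set `S` is connected. -/
def ConnOutside (S : Set G.V) : Prop :=
  ∀ u v : G.V, u ∉ S → v ∉ S → G.ReachOutside S u v

/-- `k`-connectivity: more than `k` vertices, and removing fewer than `k` vertices
leaves a connected graph. -/
def KConnected (k : ℕ) : Prop :=
  k + 1 ≤ Fintype.card G.V ∧ ∀ S : Set G.V, S.ncard < k → G.ConnOutside S

/-- `P` is the edge set of a path from `a` to `b` (possibly trivial when `a = b`). -/
def IsPath (P : Set G.E) (a b : G.V) : Prop :=
  (a = b ∧ P = ∅) ∨
  (a ≠ b ∧ P.Nonempty ∧ G.deg P a = 1 ∧ G.deg P b = 1 ∧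
    (∀ v, v ≠ a → v ≠ b → G.deg P v = 0 ∨ G.deg P v = 2) ∧ G.conn P)

/-- The vertices of a path from `a` to `b`, including its ends. -/
def pverts (P : Set G.E) (a b : G.V) : Set G.V := G.verts P ∪ {a, b}

/-- An edge set is an edge-cut `δ(X)`. -/
def EdgeCut (S : Set G.E) : Prop :=
  ∃ X : Set G.V, ∀ e, e ∈ S ↔ ∃ a b, G.ends e = s(a, b) ∧ a ∈ X ∧ b ∉ X

/-- A signed graph is simple if no two distinct edges are parallel. -/
def Simple : Prop := ∀ e f : G.E, G.ends e = G.ends f → e = f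

end SGraph

namespace SGraph

/-- The signed graph obtained from the edges `E₁` of `G` by adding one extra edge
between `u` and `v` of sign `σ`. -/
def plus1 (G : SGraph) (E₁ : Finset G.E) {u v : G.V} (huv : u ≠ v) (σ : ℤˣ) : SGraph where
  V := G.V
  E := {e : G.E // e ∈ E₁} ⊕ Unit
  ends := Sum.elim (fun e => G.ends e.1) (fun _ => s(u, v))
  loopless := by
    rintro (e | e)
    · exact G.loopless e.1
    · simpa [Sym2.mk_isDiag_iff] using huv
  sgn := Sum.elim (fun e => G.sgn e.1) (fun _ => σ)

/-- The signed graph obtained from the edges `E₁` of `G` by adding two extra parallel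
edges between `u` and `v`, one positive and one negative. -/
def plus2 (G : SGraph) (E₁ : Finset G.E) {u v : G.V} (huv : u ≠ v) : SGraph where
  V := G.V
  E := {e : G.E // e ∈ E₁} ⊕ Bool
  ends := Sum.elim (fun e => G.ends e.1) (fun _ => s(u, v))
  loopless := by
    rintro (e | e)
    · exact G.loopless e.1
    · simpa [Sym2.mk_isDiag_iff] using huv
  sgn := Sum.elim (fun e => G.sgn e.1) (fun b => if b then 1 else -1)

end SGraph

namespace SGraph

open Set

variable {H : SGraph}

lemma deg_def (S : Set H.E) (w : H.V) : H.deg S w = {e ∈ S | w ∈ H.ends e}.ncard := rfl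

/-- The adjacency step relation on edges used in `conn`. -/
def erel (H : SGraph) (S : Set H.E) : H.E → H.E → Prop :=
  fun a b => a ∈ S ∧ b ∈ S ∧ ∃ v, v ∈ H.ends a ∧ v ∈ H.ends b

lemma conn_iff {S : Set H.E} :
    H.conn S ↔ ∀ e ∈ S, ∀ f ∈ S, Relation.ReflTransGen (H.erel S) e f := Iff.rfl

lemma erel_symm (S : Set H.E) : Symmetric (H.erel S) :=
  fun _ _ ⟨ha, hb, v, hva, hvb⟩ => ⟨hb, ha, v, hvb, hva⟩

lemma erel_mono {S T : Set H.E} (h : S ⊆ T) {a b : H.E} (hab : H.erel S a b) :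
    H.erel T a b := ⟨h hab.1, h hab.2.1, hab.2.2⟩

lemma exists_edge_of_deg_ne_zero {S : Set H.E} {w : H.V} (h : H.deg S w ≠ 0) :
    ∃ e ∈ S, w ∈ H.ends e := by
  obtain ⟨e, he⟩ := Set.nonempty_of_ncard_ne_zero h
  exact ⟨e, he.1, he.2⟩

lemma deg_ne_zero_of_mem {S : Set H.E} {w : H.V} {e : H.E} (he : e ∈ S) (hw : w ∈ H.ends e) :
    H.deg S w ≠ 0 := by
  have : 0 < H.deg S w := (Set.ncard_pos (Set.toFinite _)).mpr ⟨e, he, hw⟩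
  omega

lemma deg_union (A B : Set H.E) (hd : Disjoint A B) (w : H.V) :
    H.deg (A ∪ B) w = H.deg A w + H.deg B w := by
  unfold deg
  rw [show {e ∈ A ∪ B | w ∈ H.ends e} = {e ∈ A | w ∈ H.ends e} ∪ {e ∈ B | w ∈ H.ends e} by
    ext e; simp only [mem_union, mem_setOf_eq, Set.mem_sep_iff]; tauto]
  exact Set.ncard_union_eq
    (Set.disjoint_left.mpr fun {x} hx hx' => (Set.disjoint_left.mp hd hx.1) hx'.1)
    (Set.toFinite _) (Set.toFinite _)

lemma deg_singleton (e : H.E) (w : H.V) :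
    H.deg {e} w = if w ∈ H.ends e then 1 else 0 := by
  unfold deg
  split
  · rw [show {f ∈ ({e} : Set H.E) | w ∈ H.ends f} = {e} by
      ext f; simp_all]
    exact Set.ncard_singleton e
  · rw [show {f ∈ ({e} : Set H.E) | w ∈ H.ends f} = ∅ by
      ext f; simp_all]
    exact Set.ncard_empty _

lemma deg_diff_singleton_mem {P : Set H.E} {e0 : H.E} (he0 : e0 ∈ P) {w : H.V}
    (hw : w ∈ H.ends e0) : H.deg (P \ {e0}) w = H.deg P w - 1 := by
  unfold deg
  rw [show {e ∈ P \ {e0} | w ∈ H.ends e} = {e ∈ P | w ∈ H.ends e} \ {e0} by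
    ext f; simp only [mem_diff, mem_singleton_iff, Set.mem_sep_iff, Set.mem_setOf_eq]; tauto]
  exact Set.ncard_diff_singleton_of_mem ⟨he0, hw⟩

lemma deg_diff_singleton_not_mem {P : Set H.E} {e0 : H.E} {w : H.V}
    (hw : w ∉ H.ends e0) : H.deg (P \ {e0}) w = H.deg P w := by
  unfold deg
  congr 1
  ext f
  simp only [mem_diff, mem_singleton_iff, Set.mem_sep_iff, Set.mem_setOf_eq]
  constructor
  · tauto
  · rintro ⟨hf, hwf⟩; exact ⟨⟨hf, fun h => hw (h ▸ hwf)⟩, hwf⟩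

lemma deg_mono {S T : Set H.E} (h : S ⊆ T) (w : H.V) : H.deg S w ≤ H.deg T w :=
  Set.ncard_le_ncard (fun _ hx => ⟨h hx.1, hx.2⟩) (Set.toFinite _)

lemma mem_verts {S : Set H.E} {w : H.V} : w ∈ H.verts S ↔ ∃ e ∈ S, w ∈ H.ends e := Iff.rfl

lemma deg_eq_zero_of_not_mem_verts {S : Set H.E} {w : H.V} (h : w ∉ H.verts S) :
    H.deg S w = 0 := by
  unfold deg
  rw [show {e ∈ S | w ∈ H.ends e} = ∅ by
    ext f; simp only [Set.mem_sep_iff, mem_empty_iff_false, iff_false, not_and]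
    exact fun hf hw => h ⟨f, hf, hw⟩]
  exact Set.ncard_empty _

lemma verts_mono {S T : Set H.E} (h : S ⊆ T) : H.verts S ⊆ H.verts T :=
  fun _ ⟨e, he, hw⟩ => ⟨e, h he, hw⟩

lemma exists_ends (e : H.E) : ∃ a b, a ≠ b ∧ H.ends e = s(a, b) := by
  obtain ⟨a, b, hz⟩ : ∃ a b, H.ends e = s(a, b) := by
    induction H.ends e using Sym2.ind with
    | _ x y => exact ⟨x, y, rfl⟩
  refine ⟨a, b, fun hab => H.loopless e ?_, hz⟩
  rw [hz, Sym2.mk_isDiag_iff]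
  exact hab

lemma exists_other (e : H.E) {a : H.V} (ha : a ∈ H.ends e) :
    ∃ b, a ≠ b ∧ H.ends e = s(a, b) := by
  obtain ⟨x, y, hxy, hz⟩ := exists_ends e
  rw [hz, Sym2.mem_iff] at ha
  rcases ha with rfl | rfl
  · exact ⟨y, hxy, hz⟩
  · exact ⟨x, hxy.symm, hz.trans (Sym2.eq_swap)⟩

lemma sum_deg (S : Set H.E) : ∑ w, H.deg S w = 2 * S.ncard := by
  classical
  have h1 : ∀ w, H.deg S w = ∑ e ∈ S.toFinset, (if w ∈ H.ends e then 1 else 0) := by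
    intro w
    rw [Finset.sum_boole]
    have : {e ∈ S | w ∈ H.ends e} = ↑(S.toFinset.filter fun e => w ∈ H.ends e) := by
      ext f; simp
    rw [deg_def, this, Set.ncard_coe_finset]
    simp
  simp only [h1]
  rw [Finset.sum_comm]
  have h2 : ∀ e ∈ S.toFinset, (∑ w : H.V, if w ∈ H.ends e then 1 else 0) = 2 := by
    intro e _
    obtain ⟨a, b, hab, hz⟩ := exists_ends e
    rw [Finset.sum_boole]
    have : (Finset.univ.filter fun w => w ∈ H.ends e) = {a, b} := by
      ext w; simp [hz, Sym2.mem_iff]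
    rw [this, Finset.card_pair hab]
    rfl
  rw [Finset.sum_congr rfl h2, Finset.sum_const, smul_eq_mul, Set.ncard_eq_toFinset_card' S,
    mul_comm]

lemma signOf_union {A B : Set H.E} (hd : Disjoint A B) :
    H.signOf (A ∪ B) = H.signOf A * H.signOf B :=
  finprod_mem_union hd (Set.toFinite _) (Set.toFinite _)

lemma signOf_eq_one {A : Set H.E} (h : ∀ e ∈ A, H.sgn e = 1) : H.signOf A = 1 :=
  finprod_mem_of_eqOn_one h

lemma IsPath.symm {P : Set H.E} {a b : H.V} (h : H.IsPath P a b) : H.IsPath P b a := by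
  rcases h with ⟨rfl, rfl⟩ | ⟨hab, hne, ha, hb, hmid, hconn⟩
  · exact Or.inl ⟨rfl, rfl⟩
  · exact Or.inr ⟨hab.symm, hne, hb, ha, fun w h1 h2 => hmid w h2 h1, hconn⟩

end SGraph
namespace SGraph

open Set

variable {H : SGraph}

lemma only_edge {P : Set H.E} {w : H.V} {e0 : H.E} (hd : H.deg P w = 1)
    (he0 : e0 ∈ P) (hw : w ∈ H.ends e0) : ∀ f ∈ P, w ∈ H.ends f → f = e0 := by
  intro f hf hwf
  by_contra hne
  have hsub : ({e0, f} : Set H.E) ⊆ {e ∈ P | w ∈ H.ends e} := by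
    intro g hg
    rcases hg with rfl | rfl
    · exact ⟨he0, hw⟩
    · exact ⟨hf, hwf⟩
  have h2 : 2 ≤ H.deg P w := by
    rw [deg_def]
    calc 2 = ({e0, f} : Set H.E).ncard := (Set.ncard_pair (fun h => hne h.symm)).symm
      _ ≤ _ := Set.ncard_le_ncard hsub (Set.toFinite _)
  omega

lemma isPath_single {a b : H.V} {e : H.E} (he : H.ends e = s(a, b)) :
    H.IsPath {e} a b := by
  have hab : a ≠ b := by
    intro h
    exact H.loopless e (by rw [he, Sym2.mk_isDiag_iff]; exact h)
  refine Or.inr ⟨hab, ⟨e, rfl⟩, ?_, ?_, ?_, ?_⟩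
  · rw [deg_singleton, if_pos (by rw [he]; simp)]
  · rw [deg_singleton, if_pos (by rw [he]; simp)]
  · intro w hwa hwb
    left
    rw [deg_singleton, if_neg (by rw [he, Sym2.mem_iff]; push_neg; exact ⟨hwa, hwb⟩)]
  · intro f hf g hg
    rw [Set.mem_singleton_iff] at hf hg
    subst hf; subst hg
    exact Relation.ReflTransGen.refl

lemma isPath_attach {P : Set H.E} {a c b : H.V} {e : H.E}
    (hP : H.IsPath P a c) (he : H.ends e = s(c, b)) (hbv : b ∉ H.verts P)
    (hba : b ≠ a) : H.IsPath (P ∪ {e}) a b := by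
  have hcb : c ≠ b := by
    intro h
    exact H.loopless e (by rw [he, Sym2.mk_isDiag_iff]; exact h)
  rcases hP with ⟨rfl, rfl⟩ | ⟨hac, hne, hda, hdc, hmid, hconn⟩
  · rw [Set.empty_union]
    exact isPath_single he
  · have heP : e ∉ P := fun h => hbv ⟨e, h, by rw [he]; simp⟩
    have hdisj : Disjoint P {e} := Set.disjoint_singleton_right.mpr heP
    have hbP : H.deg P b = 0 := deg_eq_zero_of_not_mem_verts hbv
    have hae : a ∉ H.ends e := by
      rw [he, Sym2.mem_iff]; push_neg; exact ⟨hac, fun h => hba h.symm⟩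
    have hce : c ∈ H.ends e := by rw [he]; simp
    have hbe : b ∈ H.ends e := by rw [he]; simp
    obtain ⟨fc, hfcP, hfcc⟩ := exists_edge_of_deg_ne_zero (w := c) (by rw [hdc]; exact one_ne_zero)
    refine Or.inr ⟨fun h => hba h.symm, ⟨e, Or.inr rfl⟩, ?_, ?_, ?_, ?_⟩
    · rw [deg_union _ _ hdisj, deg_singleton, if_neg hae, hda]
    · rw [deg_union _ _ hdisj, deg_singleton, if_pos hbe, hbP]
    · intro w hwa hwb
      rw [deg_union _ _ hdisj, deg_singleton]
      by_cases hwc : w = c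
      · subst hwc; rw [if_pos hce, hdc]; right; rfl
      · have hwe : w ∉ H.ends e := by rw [he, Sym2.mem_iff]; push_neg; exact ⟨hwc, hwb⟩
        rw [if_neg hwe]
        rcases hmid w hwa hwc with h | h <;> simp [h]
    · have hstep : H.erel (P ∪ {e}) fc e := ⟨Or.inl hfcP, Or.inr rfl, c, hfcc, hce⟩
      have hlift : ∀ {f g : H.E}, Relation.ReflTransGen (H.erel P) f g →
          Relation.ReflTransGen (H.erel (P ∪ {e})) f g :=
        fun h => Relation.ReflTransGen.mono (fun _ _ hr => erel_mono Set.subset_union_left hr) _ _ h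
      intro f hf g hg
      rcases hf with hf | hf <;> rcases hg with hg | hg
      · exact hlift (hconn f hf g hg)
      · rw [Set.mem_singleton_iff] at hg; subst hg
        exact (hlift (hconn f hf fc hfcP)).tail hstep
      · rw [Set.mem_singleton_iff] at hf; subst hf
        exact Relation.ReflTransGen.head (erel_symm _ hstep) (hlift (hconn fc hfcP g hg))
      · rw [Set.mem_singleton_iff] at hf hg; subst hf; subst hg
        exact Relation.ReflTransGen.refl

lemma bypass {P : Set H.E} {e0 : H.E} {x : H.V}
    (hsh : ∀ f ∈ P, f ≠ e0 → (∃ w, w ∈ H.ends f ∧ w ∈ H.ends e0) → x ∈ H.ends f)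
    {g : H.E} (hg : g ≠ e0) :
    ∀ {f}, Relation.ReflTransGen (H.erel P) f g →
      (f ≠ e0 → Relation.ReflTransGen (H.erel (P \ {e0})) f g) ∧
      (f = e0 → ∀ h ∈ P, h ≠ e0 → x ∈ H.ends h →
        Relation.ReflTransGen (H.erel (P \ {e0})) h g) := by
  intro f hf
  induction hf using Relation.ReflTransGen.head_induction_on with
  | refl => exact ⟨fun _ => Relation.ReflTransGen.refl, fun hfe => absurd hfe hg⟩
  | @head f' c hstep htail ih =>
    obtain ⟨hf'P, hcP, w, hwf', hwc⟩ := hstep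
    constructor
    · intro hfne
      by_cases hce : c = e0
      · subst hce
        exact ih.2 rfl f' hf'P hfne (hsh f' hf'P hfne ⟨w, hwf', hwc⟩)
      · exact Relation.ReflTransGen.head ⟨⟨hf'P, hfne⟩, ⟨hcP, hce⟩, w, hwf', hwc⟩ (ih.1 hce)
    · intro hfe h hhP hhne hxh
      by_cases hce : c = e0
      · subst hce
        exact ih.2 rfl h hhP hhne hxh
      · subst hfe
        have hxc : x ∈ H.ends c := hsh c hcP hce ⟨w, hwc, hwf'⟩
        exact Relation.ReflTransGen.head ⟨⟨hhP, hhne⟩, ⟨hcP, hce⟩, x, hxh, hxc⟩ (ih.1 hce)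

lemma exists_last_step {S : Set H.E} {e0 f : H.E}
    (h : Relation.ReflTransGen (H.erel S) f e0) : f ≠ e0 →
    ∃ h', h' ∈ S ∧ h' ≠ e0 ∧ ∃ w, w ∈ H.ends h' ∧ w ∈ H.ends e0 := by
  induction h using Relation.ReflTransGen.head_induction_on with
  | refl => exact fun hne => absurd rfl hne
  | @head p q hstep htail ih =>
    intro hne
    by_cases hq : q = e0
    · subst hq
      exact ⟨p, hstep.1, hne, hstep.2.2⟩
    · exact ih hq

lemma isPath_removeLeaf {P : Set H.E} {a c x : H.V} {e0 : H.E}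
    (hP : H.IsPath P a c) (hac : a ≠ c) (he0 : e0 ∈ P) (hx : H.ends e0 = s(a, x)) :
    H.IsPath (P \ {e0}) x c := by
  rcases hP with ⟨h1, _⟩ | ⟨_, hne, hda, hdc, hmid, hconn⟩
  · exact absurd h1 hac
  have hxa : x ≠ a := by
    intro h
    exact H.loopless e0 (by rw [hx, Sym2.mk_isDiag_iff]; exact h.symm)
  have hae0 : a ∈ H.ends e0 := by rw [hx]; simp
  have hxe0 : x ∈ H.ends e0 := by rw [hx]; simp
  have ha_only := only_edge hda he0 hae0
  have hsh : ∀ f ∈ P, f ≠ e0 → (∃ w, w ∈ H.ends f ∧ w ∈ H.ends e0) → x ∈ H.ends f := by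
    rintro f hf hfne ⟨w, hwf, hwe0⟩
    rw [hx, Sym2.mem_iff] at hwe0
    rcases hwe0 with rfl | rfl
    · exact absurd (ha_only f hf hwf) hfne
    · exact hwf
  by_cases hxc : x = c
  · subst hxc
    have hc_only := only_edge hdc he0 hxe0
    have hP' : P \ {e0} = ∅ := by
      by_contra hne'
      obtain ⟨f, hf⟩ := Set.nonempty_iff_ne_empty.mpr hne'
      obtain ⟨h', hhP, hhne, hw⟩ := exists_last_step (hconn f hf.1 e0 he0) hf.2
      exact hhne (hc_only h' hhP (hsh h' hhP hhne hw))
    rw [hP']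
    exact Or.inl ⟨rfl, rfl⟩
  · have hdPx : H.deg P x = 2 := by
      rcases hmid x hxa hxc with h0 | h2
      · exact absurd h0 (deg_ne_zero_of_mem he0 hxe0)
      · exact h2
    have hd'x : H.deg (P \ {e0}) x = 1 := by
      rw [deg_diff_singleton_mem he0 hxe0, hdPx]
    have hce0 : c ∉ H.ends e0 := by
      rw [hx, Sym2.mem_iff]; push_neg
      exact ⟨fun h => hac h.symm, fun h => hxc h.symm⟩
    have hd'c : H.deg (P \ {e0}) c = 1 := by
      rw [deg_diff_singleton_not_mem hce0, hdc]
    refine Or.inr ⟨hxc, ?_, hd'x, hd'c, ?_, ?_⟩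
    · obtain ⟨f, hf, _⟩ := exists_edge_of_deg_ne_zero (w := c) (by rw [hd'c]; exact one_ne_zero)
      exact ⟨f, hf⟩
    · intro w hwx hwc
      by_cases hwa : w = a
      · subst hwa
        left
        apply deg_eq_zero_of_not_mem_verts
        rintro ⟨f, hfP, hwf⟩
        exact hfP.2 (ha_only f hfP.1 hwf)
      · have hwe0 : w ∉ H.ends e0 := by rw [hx, Sym2.mem_iff]; push_neg; exact ⟨hwa, hwx⟩
        rw [deg_diff_singleton_not_mem hwe0]
        exact hmid w hwa hwc
    · intro f hf g hg
      exact (bypass hsh hg.2 (hconn f hf.1 g hg.1)).1 hf.2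

lemma isPath_split_aux : ∀ n : ℕ, ∀ {P : Set H.E} {a c b : H.V}, P.ncard ≤ n →
    H.IsPath P a c → b ∈ H.pverts P a c → ∃ Q, Q ⊆ P ∧ H.IsPath Q a b := by
  intro n
  induction n with
  | zero =>
    intro P a c b hn hP hb
    have hPe : P = ∅ := (Set.ncard_eq_zero (Set.toFinite P)).mp (Nat.le_zero.mp hn)
    subst hPe
    have hac : a = c := by
      rcases hP with ⟨h, _⟩ | ⟨_, hne, _⟩
      · exact h
      · exact absurd hne (by simp)
    have hb' : b = a := by
      rcases hb with ⟨f, hf, _⟩ | hb2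
      · exact absurd hf (Set.notMem_empty f)
      · rcases hb2 with rfl | rfl
        · rfl
        · exact hac.symm
    exact ⟨∅, Set.Subset.rfl, Or.inl ⟨hb'.symm, rfl⟩⟩
  | succ n ih =>
    intro P a c b hn hP hb
    by_cases hba : b = a
    · exact ⟨∅, Set.empty_subset _, Or.inl ⟨hba.symm, rfl⟩⟩
    rcases hP with ⟨rfl, rfl⟩ | ⟨hac, hne, hda, hdc, hmid, hconn⟩
    · exfalso
      rcases hb with ⟨f, hf, _⟩ | hb2
      · exact Set.notMem_empty f hf
      · rcases hb2 with rfl | rfl <;> exact hba rfl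
    · obtain ⟨e0, he0, hae0⟩ := exists_edge_of_deg_ne_zero (w := a) (by rw [hda]; exact one_ne_zero)
      obtain ⟨x, hax, hx⟩ := exists_other e0 hae0
      have hPpath : H.IsPath P a c := Or.inr ⟨hac, hne, hda, hdc, hmid, hconn⟩
      have hP' := isPath_removeLeaf hPpath hac he0 hx
      have hcard : (P \ {e0}).ncard ≤ n := by
        have h1 := Set.ncard_diff_singleton_of_mem he0
        have h2 : 0 < P.ncard := (Set.ncard_pos (Set.toFinite _)).mpr ⟨e0, he0⟩
        omega
      have hb' : b ∈ H.pverts (P \ {e0}) x c := by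
        rcases hb with ⟨f, hfP, hbf⟩ | hb2
        · by_cases hfe : f = e0
          · subst hfe
            rw [hx, Sym2.mem_iff] at hbf
            rcases hbf with rfl | rfl
            · exact absurd rfl hba
            · exact Or.inr (Or.inl rfl)
          · exact Or.inl ⟨f, ⟨hfP, hfe⟩, hbf⟩
        · rcases hb2 with rfl | rfl
          · exact absurd rfl hba
          · exact Or.inr (Or.inr rfl)
      obtain ⟨Q, hQsub, hQ⟩ := ih hcard hP' hb'
      have haQ : a ∉ H.verts Q := by
        rintro ⟨f, hfQ, haf⟩
        exact (hQsub hfQ).2 (only_edge hda he0 hae0 f (hQsub hfQ).1 haf)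
      have hattach := isPath_attach hQ.symm (hx.trans Sym2.eq_swap) haQ (fun h => hba h.symm)
      refine ⟨Q ∪ {e0}, ?_, hattach.symm⟩
      intro g hg
      rcases hg with hg | hg
      · exact (hQsub hg).1
      · rw [Set.mem_singleton_iff] at hg; subst hg; exact he0

lemma isPath_split {P : Set H.E} {a c b : H.V} (hP : H.IsPath P a c)
    (hb : b ∈ H.pverts P a c) : ∃ Q, Q ⊆ P ∧ H.IsPath Q a b :=
  isPath_split_aux P.ncard le_rfl hP hb

lemma exists_path_of_reach {S : Set H.E} {a b : H.V}
    (h : Relation.ReflTransGen (fun p q => ∃ e ∈ S, H.ends e = s(p, q)) a b) :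
    ∃ P, P ⊆ S ∧ H.IsPath P a b := by
  induction h with
  | refl => exact ⟨∅, Set.empty_subset _, Or.inl ⟨rfl, rfl⟩⟩
  | @tail m f h1 h2 ih =>
    obtain ⟨P, hPS, hP⟩ := ih
    obtain ⟨e, heS, he⟩ := h2
    by_cases hb : f ∈ H.pverts P a m
    · obtain ⟨Q, hQP, hQ⟩ := isPath_split hP hb
      exact ⟨Q, fun g hg => hPS (hQP hg), hQ⟩
    · have hbv : f ∉ H.verts P := fun h => hb (Or.inl h)
      have hba : f ≠ a := fun h => hb (Or.inr (Or.inl h))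
      refine ⟨P ∪ {e}, ?_, isPath_attach hP he hbv hba⟩
      intro g hg
      rcases hg with hg | hg
      · exact hPS hg
      · rw [Set.mem_singleton_iff] at hg; subst hg; exact heS

end SGraph
namespace SGraph

open Set

variable {G : SGraph} {E₁ : Finset G.E} {u v : G.V} {huv : u ≠ v} {σ : ℤˣ}

/-- Push a set of `plus1`-edges down to `G`. -/
def pdown (G : SGraph) (E₁ : Finset G.E) (D : Set ({e : G.E // e ∈ E₁} ⊕ Unit)) : Set G.E :=
  Subtype.val '' (Sum.inl ⁻¹' D)

/-- Lift a set of `G`-edges (contained in `E₁`) to `plus1`-edges. -/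
def plift (G : SGraph) (E₁ : Finset G.E) (C : Set G.E) : Set ({e : G.E // e ∈ E₁} ⊕ Unit) :=
  Sum.inl '' (Subtype.val ⁻¹' C)

def pmap (G : SGraph) (E₁ : Finset G.E) (e : G.E) : {e : G.E // e ∈ E₁} ⊕ Unit :=
  if h : e ∈ E₁ then Sum.inl ⟨e, h⟩ else Sum.inr ()

lemma pmap_mem {e : G.E} (h : e ∈ E₁) : pmap G E₁ e = Sum.inl ⟨e, h⟩ := dif_pos h

lemma mem_pdown {D : Set ({e : G.E // e ∈ E₁} ⊕ Unit)} {e : G.E} :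
    e ∈ pdown G E₁ D ↔ ∃ h : e ∈ E₁, Sum.inl ⟨e, h⟩ ∈ D := by
  constructor
  · rintro ⟨y, hy, rfl⟩
    exact ⟨y.2, hy⟩
  · rintro ⟨h, hD⟩
    exact ⟨⟨e, h⟩, hD, rfl⟩

lemma pdown_subset {D : Set ({e : G.E // e ∈ E₁} ⊕ Unit)} : pdown G E₁ D ⊆ ↑E₁ := by
  rintro e ⟨y, _, rfl⟩
  exact y.2

lemma mem_plift_inl {C : Set G.E} {y : {e : G.E // e ∈ E₁}} :
    Sum.inl y ∈ plift G E₁ C ↔ y.val ∈ C := by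
  constructor
  · rintro ⟨y', hy', heq⟩
    obtain rfl : y' = y := Sum.inl_injective heq
    exact hy'
  · intro h
    exact ⟨y, h, rfl⟩

lemma not_inr_mem_plift {C : Set G.E} : Sum.inr () ∉ plift G E₁ C := by
  rintro ⟨y, _, heq⟩
  exact Sum.inl_ne_inr heq

lemma pdown_plift {C : Set G.E} : pdown G E₁ (plift G E₁ C) = C ∩ ↑E₁ := by
  ext e
  rw [mem_pdown]
  constructor
  · rintro ⟨h, hD⟩
    exact ⟨(mem_plift_inl).mp hD, h⟩
  · rintro ⟨hC, hE⟩
    exact ⟨hE, (mem_plift_inl).mpr hC⟩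

lemma pdown_union_inr {C : Set G.E} :
    pdown G E₁ (plift G E₁ C ∪ {Sum.inr ()}) = C ∩ ↑E₁ := by
  ext e
  rw [mem_pdown]
  constructor
  · rintro ⟨h, hD | hD⟩
    · exact ⟨(mem_plift_inl).mp hD, h⟩
    · exact absurd hD (by simp)
  · rintro ⟨hC, hE⟩
    exact ⟨hE, Or.inl ((mem_plift_inl).mpr hC)⟩

lemma deg_pdown_of_not_mem (D : Set (G.plus1 E₁ huv σ).E) (hex : Sum.inr () ∉ D) (w : G.V) :
    (G.plus1 E₁ huv σ).deg D w = G.deg (pdown G E₁ D) w := by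
  have h1 : {x ∈ D | w ∈ (G.plus1 E₁ huv σ).ends x}
      = Sum.inl '' {y : {e : G.E // e ∈ E₁} | Sum.inl y ∈ D ∧ w ∈ G.ends y.val} := by
    ext x
    cases x with
    | inl y =>
      constructor
      · rintro ⟨hD, hw⟩
        exact ⟨y, ⟨hD, hw⟩, rfl⟩
      · rintro ⟨y', ⟨hD, hw⟩, heq⟩
        obtain rfl : y' = y := Sum.inl_injective heq
        exact ⟨hD, hw⟩
    | inr t =>
      cases t
      constructor
      · rintro ⟨hD, _⟩
        exact absurd hD hex
      · rintro ⟨y', _, heq⟩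
        exact absurd heq (by simp)
  have h2 : {e ∈ pdown G E₁ D | w ∈ G.ends e}
      = Subtype.val '' {y : {e : G.E // e ∈ E₁} | Sum.inl y ∈ D ∧ w ∈ G.ends y.val} := by
    ext e
    constructor
    · rintro ⟨⟨y, hy, rfl⟩, hw⟩
      exact ⟨y, ⟨hy, hw⟩, rfl⟩
    · rintro ⟨y, ⟨hy, hw⟩, rfl⟩
      exact ⟨⟨y, hy, rfl⟩, hw⟩
  erw [deg_def, deg_def, h1, h2, Set.ncard_image_of_injective _ Sum.inl_injective,
    Set.ncard_image_of_injective _ Subtype.val_injective]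

lemma pdown_diff_inr (D : Set ({e : G.E // e ∈ E₁} ⊕ Unit)) :
    pdown G E₁ (D \ {Sum.inr ()}) = pdown G E₁ D := by
  unfold pdown
  ext y
  simp [pdown]

lemma deg_pdown_of_mem (D : Set (G.plus1 E₁ huv σ).E) (hex : Sum.inr () ∈ D) (w : G.V) :
    (G.plus1 E₁ huv σ).deg D w
      = G.deg (pdown G E₁ D) w + (if w = u ∨ w = v then 1 else 0) := by
  have hD : D = (D \ {Sum.inr ()}) ∪ {Sum.inr ()} :=
    (Set.diff_union_of_subset (Set.singleton_subset_iff.mpr hex)).symm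
  have hdisj : Disjoint (D \ {Sum.inr ()}) ({Sum.inr ()} : Set (G.plus1 E₁ huv σ).E) :=
    disjoint_sdiff_left
  calc (G.plus1 E₁ huv σ).deg D w
      = (G.plus1 E₁ huv σ).deg ((D \ {Sum.inr ()}) ∪ {Sum.inr ()}) w := by rw [← hD]
    _ = (G.plus1 E₁ huv σ).deg (D \ {Sum.inr ()}) w
        + (G.plus1 E₁ huv σ).deg {Sum.inr ()} w := deg_union _ _ hdisj w
    _ = G.deg (pdown G E₁ D) w + (if w = u ∨ w = v then 1 else 0) := by
        erw [deg_pdown_of_not_mem _ (fun h => h.2 rfl), pdown_diff_inr, deg_singleton]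
        congr 1
        by_cases hw : w = u ∨ w = v
        · erw [if_pos (show w ∈ (G.plus1 E₁ huv σ).ends (Sum.inr ()) from Sym2.mem_iff.mpr hw),
            if_pos hw]
        · erw [if_neg (show w ∉ (G.plus1 E₁ huv σ).ends (Sum.inr ()) from
            fun h => hw (Sym2.mem_iff.mp h)), if_neg hw]

lemma sign_pdown (D : Set (G.plus1 E₁ huv 1).E) :
    (G.plus1 E₁ huv 1).signOf D = G.signOf (pdown G E₁ D) := by
  have h1 : D \ {Sum.inr ()} = Sum.inl '' (Sum.inl ⁻¹' D) := by
    ext x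
    cases x with
    | inl y =>
      constructor
      · rintro ⟨hD, _⟩
        exact ⟨y, hD, rfl⟩
      · rintro ⟨y', hy', heq⟩
        obtain rfl : y' = y := Sum.inl_injective heq
        exact ⟨hy', fun h => Sum.inl_ne_inr h⟩
    | inr t =>
      cases t
      constructor
      · rintro ⟨_, h⟩
        exact absurd rfl h
      · rintro ⟨y', _, heq⟩
        exact absurd heq (by simp)
  have key : (G.plus1 E₁ huv 1).signOf (Sum.inl '' (Sum.inl ⁻¹' D) : Set (G.plus1 E₁ huv 1).E)
      = G.signOf (pdown G E₁ D) := by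
    show (∏ᶠ (x : {e : G.E // e ∈ E₁} ⊕ Unit) (_ : x ∈ Sum.inl '' (Sum.inl ⁻¹' D)),
        (G.plus1 E₁ huv 1).sgn x)
      = ∏ᶠ (e : G.E) (_ : e ∈ Subtype.val '' (Sum.inl ⁻¹' D)), G.sgn e
    erw [finprod_mem_image (Sum.inl_injective.injOn), finprod_mem_image (Subtype.val_injective.injOn)]
    rfl
  by_cases hex : Sum.inr () ∈ D
  · have hD : D = (D \ {Sum.inr ()}) ∪ {Sum.inr ()} :=
      (Set.diff_union_of_subset (Set.singleton_subset_iff.mpr hex)).symm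
    calc (G.plus1 E₁ huv 1).signOf D
        = (G.plus1 E₁ huv 1).signOf ((D \ {Sum.inr ()}) ∪ {Sum.inr ()}) := by rw [← hD]
      _ = (G.plus1 E₁ huv 1).signOf (D \ {Sum.inr ()})
          * (G.plus1 E₁ huv 1).signOf {Sum.inr ()} := signOf_union disjoint_sdiff_left
      _ = G.signOf (pdown G E₁ D) * 1 := by
          erw [h1, key]
          congr 1
          apply signOf_eq_one
          rintro x hx
          erw [Set.mem_singleton_iff] at hx
          subst hx
          rfl
      _ = G.signOf (pdown G E₁ D) := mul_one _
  · have hD : D \ {Sum.inr ()} = D := Set.diff_singleton_eq_self hex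
    erw [← key, ← h1, hD]

lemma conn_plift {C : Set G.E} (hC1 : C ⊆ ↑E₁) (hconn : G.conn C) :
    (G.plus1 E₁ huv σ).conn (plift G E₁ C) := by
  have hmap : ∀ a b, G.erel C a b →
      (G.plus1 E₁ huv σ).erel (plift G E₁ C) (pmap G E₁ a) (pmap G E₁ b) := by
    rintro a b ⟨haC, hbC, w, hwa, hwb⟩
    have ha1 : a ∈ E₁ := hC1 haC
    have hb1 : b ∈ E₁ := hC1 hbC
    rw [pmap_mem ha1, pmap_mem hb1]
    exact ⟨(mem_plift_inl).mpr haC, (mem_plift_inl).mpr hbC, w, hwa, hwb⟩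
  intro x hx y hy
  obtain ⟨yx, hyxC, rfl⟩ := hx
  obtain ⟨yy, hyyC, rfl⟩ := hy
  have h := Relation.ReflTransGen.lift (pmap G E₁) hmap _ _ (hconn yx.val hyxC yy.val hyyC)
  rwa [Function.onFun, pmap_mem yx.2, pmap_mem yy.2] at h

lemma conn_pdown {D : Set (G.plus1 E₁ huv σ).E} (hex : Sum.inr () ∉ D)
    (hconn : (G.plus1 E₁ huv σ).conn D) : G.conn (pdown G E₁ D) := by
  intro e he f hf
  obtain ⟨he1, heD⟩ := (mem_pdown).mp he
  obtain ⟨hf1, hfD⟩ := (mem_pdown).mp hf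
  classical
  let ψ : (G.plus1 E₁ huv σ).E → G.E := Sum.elim Subtype.val (fun _ => e)
  have hmap : ∀ a b, (G.plus1 E₁ huv σ).erel D a b →
      G.erel (pdown G E₁ D) (ψ a) (ψ b) := by
    rintro a b ⟨haD, hbD, w, hwa, hwb⟩
    cases a with
    | inr t => cases t; exact absurd haD hex
    | inl ya =>
      cases b with
      | inr t => cases t; exact absurd hbD hex
      | inl yb =>
        exact ⟨⟨ya, haD, rfl⟩, ⟨yb, hbD, rfl⟩, w, hwa, hwb⟩
  have h := Relation.ReflTransGen.lift ψ hmap _ _ (hconn _ heD _ hfD)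
  exact h

end SGraph
namespace SGraph

open Set

variable {G : SGraph}

lemma cycle_restrict {E₁ E₂ : Finset G.E} (hdisj : Disjoint E₁ E₂)
    (hcover : E₁ ∪ E₂ = Finset.univ) {u v : G.V} (huv : u ≠ v)
    (hsep : G.verts ↑E₁ ∩ G.verts ↑E₂ = {u, v})
    {C : Set G.E} (hC : G.IsCycle C) {g0 : G.E} (hg0 : g0 ∈ C) (hg01 : g0 ∈ E₁)
    (hCE₂ : (C ∩ ↑E₂).Nonempty) :
    G.deg (C ∩ ↑E₁) u = 1 ∧ G.deg (C ∩ ↑E₂) u = 1 ∧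
    G.deg (C ∩ ↑E₁) v = 1 ∧ G.deg (C ∩ ↑E₂) v = 1 := by
  obtain ⟨-, hdeg, hconn⟩ := hC
  have hsplit : C = (C ∩ ↑E₁) ∪ (C ∩ ↑E₂) := by
    ext e
    constructor
    · intro he
      have h : e ∈ E₁ ∪ E₂ := hcover ▸ Finset.mem_univ e
      rcases Finset.mem_union.mp h with h | h
      · exact Or.inl ⟨he, h⟩
      · exact Or.inr ⟨he, h⟩
    · rintro (⟨he, -⟩ | ⟨he, -⟩) <;> exact he
  have hdd : Disjoint (C ∩ ↑E₁) (C ∩ ↑E₂) := by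
    rw [Set.disjoint_left]
    rintro x ⟨-, h1⟩ ⟨-, h2⟩
    exact Finset.disjoint_left.mp hdisj h1 h2
  have hdegsum : ∀ w, G.deg C w = G.deg (C ∩ ↑E₁) w + G.deg (C ∩ ↑E₂) w := by
    intro w
    have h := deg_union (C ∩ ↑E₁) (C ∩ ↑E₂) hdd w
    rw [← hsplit] at h
    exact h
  have hbd : ∀ w, G.deg (C ∩ ↑E₁) w ≠ 0 → G.deg (C ∩ ↑E₂) w ≠ 0 → w = u ∨ w = v := by
    intro w h1 h2
    obtain ⟨f, hf, hwf⟩ := exists_edge_of_deg_ne_zero h1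
    obtain ⟨f', hf', hwf'⟩ := exists_edge_of_deg_ne_zero h2
    have hmem : w ∈ G.verts ↑E₁ ∩ G.verts ↑E₂ := ⟨⟨f, hf.2, hwf⟩, ⟨f', hf'.2, hwf'⟩⟩
    rw [hsep] at hmem
    simpa using hmem
  -- find a crossing vertex
  obtain ⟨g2, hg2C, hg22⟩ := hCE₂
  have aux : ∀ x, Relation.ReflTransGen (G.erel C) x g2 → x ∈ E₁ →
      ∃ f f', (f ∈ C ∩ ↑E₁) ∧ (f' ∈ C ∩ ↑E₂) ∧ ∃ w, w ∈ G.ends f ∧ w ∈ G.ends f' := by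
    intro x hx
    induction hx using Relation.ReflTransGen.head_induction_on with
    | refl =>
      intro hx1
      exact absurd hg22 (Finset.disjoint_left.mp hdisj hx1)
    | @head a b hstep htail ih =>
      intro ha1
      obtain ⟨haC, hbC, w, hwa, hwb⟩ := hstep
      by_cases hb2 : b ∈ E₂
      · exact ⟨a, b, ⟨haC, ha1⟩, ⟨hbC, hb2⟩, w, hwa, hwb⟩
      · have hb1 : b ∈ E₁ := by
          have h : b ∈ E₁ ∪ E₂ := hcover ▸ Finset.mem_univ b
          rcases Finset.mem_union.mp h with h | h
          · exact h
          · exact absurd h hb2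
        exact ih hb1
  obtain ⟨f, f', hf, hf', w, hwf, hwf'⟩ := aux g0 (hconn g0 hg0 g2 hg2C) hg01
  have hw : w = u ∨ w = v := hbd w (deg_ne_zero_of_mem hf hwf) (deg_ne_zero_of_mem hf' hwf')
  have hwdeg : G.deg (C ∩ ↑E₁) w = 1 ∧ G.deg (C ∩ ↑E₂) w = 1 := by
    have h1 := deg_ne_zero_of_mem hf hwf
    have h2 := deg_ne_zero_of_mem hf' hwf'
    have hs := hdegsum w
    rcases hdeg w with h | h <;> omega
  -- parity
  have heven : Even (G.deg (C ∩ ↑E₂) u + G.deg (C ∩ ↑E₂) v) := by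
    have hsum := sum_deg (C ∩ ↑E₂)
    have hu : u ∈ Finset.univ (α := G.V) := Finset.mem_univ u
    rw [← Finset.add_sum_erase _ _ hu] at hsum
    have hv : v ∈ Finset.univ.erase u := Finset.mem_erase.mpr ⟨huv.symm, Finset.mem_univ v⟩
    rw [← Finset.add_sum_erase _ _ hv] at hsum
    have htail : Even (∑ w ∈ (Finset.univ.erase u).erase v, G.deg (C ∩ ↑E₂) w) := by
      apply Finset.even_sum
      intro w hwm
      obtain ⟨hwv, hwu, -⟩ : w ≠ v ∧ w ≠ u ∧ True := by
        rcases Finset.mem_erase.mp hwm with ⟨h1, h2⟩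
        exact ⟨h1, (Finset.mem_erase.mp h2).1, trivial⟩
      by_cases h2 : G.deg (C ∩ ↑E₂) w = 0
      · simp [h2]
      by_cases h1 : G.deg (C ∩ ↑E₁) w = 0
      · have hs := hdegsum w
        rcases hdeg w with h | h <;> (rw [Nat.even_iff]; omega)
      · exact absurd (hbd w h1 h2) (by push_neg; exact ⟨hwu, hwv⟩)
    obtain ⟨k, hk⟩ := htail
    exact ⟨(C ∩ ↑E₂).ncard - k, by omega⟩
  obtain ⟨k, hk⟩ := heven
  rcases hw with rfl | rfl
  · -- w = u
    refine ⟨hwdeg.1, hwdeg.2, ?_, ?_⟩ <;>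
    · have hsv := hdegsum v
      have h1 := hwdeg.1
      have h2 := hwdeg.2
      rcases hdeg v with h | h <;> omega
  · -- w = v
    refine ⟨?_, ?_, hwdeg.1, hwdeg.2⟩ <;>
    · have hsu := hdegsum u
      have h1 := hwdeg.1
      have h2 := hwdeg.2
      rcases hdeg u with h | h <;> omega

lemma cycle_up {E₁ E₂ : Finset G.E} (hdisj : Disjoint E₁ E₂)
    (hcover : E₁ ∪ E₂ = Finset.univ) {u v : G.V} (huv : u ≠ v)
    (hsep : G.verts ↑E₁ ∩ G.verts ↑E₂ = {u, v})
    (hpos : ∀ e ∈ E₂, G.sgn e = 1)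
    {C : Set G.E} (hC : G.IsCycle C) {g0 : G.E} (hg0 : g0 ∈ C) (hg01 : g0 ∈ E₁) :
    ∃ D : Set (G.plus1 E₁ huv 1).E, (G.plus1 E₁ huv 1).IsCycle D ∧
      (G.plus1 E₁ huv 1).signOf D = G.signOf C ∧
      ∀ e (h : e ∈ E₁), e ∈ C → Sum.inl ⟨e, h⟩ ∈ D := by
  obtain ⟨hCne, hdeg, hconn⟩ := hC
  have hsplit : C = (C ∩ ↑E₁) ∪ (C ∩ ↑E₂) := by
    ext e
    constructor
    · intro he
      have h : e ∈ E₁ ∪ E₂ := hcover ▸ Finset.mem_univ e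
      rcases Finset.mem_union.mp h with h | h
      · exact Or.inl ⟨he, h⟩
      · exact Or.inr ⟨he, h⟩
    · rintro (⟨he, -⟩ | ⟨he, -⟩) <;> exact he
  have hdd : Disjoint (C ∩ ↑E₁) (C ∩ ↑E₂) := by
    rw [Set.disjoint_left]
    rintro x ⟨-, h1⟩ ⟨-, h2⟩
    exact Finset.disjoint_left.mp hdisj h1 h2
  have hdegsum : ∀ w, G.deg C w = G.deg (C ∩ ↑E₁) w + G.deg (C ∩ ↑E₂) w := by
    intro w
    have h := deg_union (C ∩ ↑E₁) (C ∩ ↑E₂) hdd w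
    rw [← hsplit] at h
    exact h
  have hbd : ∀ {p q : G.E} {w : G.V}, p ∈ E₁ → q ∈ E₂ → w ∈ G.ends p → w ∈ G.ends q →
      w = u ∨ w = v := by
    intro p q w hp hq hwp hwq
    have hmem : w ∈ G.verts ↑E₁ ∩ G.verts ↑E₂ := ⟨⟨p, hp, hwp⟩, ⟨q, hq, hwq⟩⟩
    rw [hsep] at hmem
    simpa using hmem
  by_cases hCE₂ : (C ∩ ↑E₂).Nonempty
  · -- cycle crosses into E₂
    obtain ⟨hd1u, hd2u, hd1v, hd2v⟩ :=
      cycle_restrict hdisj hcover huv hsep ⟨hCne, hdeg, hconn⟩ hg0 hg01 hCE₂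
    refine ⟨plift G E₁ C ∪ {Sum.inr ()}, ⟨⟨Sum.inr (), Or.inr rfl⟩, ?_, ?_⟩, ?_, ?_⟩
    · -- degrees
      show ∀ w : G.V, (G.plus1 E₁ huv 1).deg (plift G E₁ C ∪ {Sum.inr ()}) w = 0 ∨
        (G.plus1 E₁ huv 1).deg (plift G E₁ C ∪ {Sum.inr ()}) w = 2
      intro w
      have hex : Sum.inr () ∈ plift G E₁ C ∪ {Sum.inr ()} := Or.inr rfl
      have h := deg_pdown_of_mem (σ := 1) (huv := huv) (plift G E₁ C ∪ {Sum.inr ()}) hex w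
      erw [pdown_union_inr] at h
      by_cases hwu : w = u
      · right
        rw [h, hwu, if_pos (Or.inl rfl), hd1u]
      by_cases hwv : w = v
      · right
        rw [h, hwv, if_pos (Or.inr rfl), hd1v]
      rw [h, if_neg (by push_neg; exact ⟨hwu, hwv⟩)]
      by_cases h2 : G.deg (C ∩ ↑E₂) w = 0
      · have hs := hdegsum w
        rcases hdeg w with hh | hh <;> omega
      by_cases h1 : G.deg (C ∩ ↑E₁) w = 0
      · simp [h1]
      · obtain ⟨f, hf, hwf⟩ := exists_edge_of_deg_ne_zero h1
        obtain ⟨f', hf', hwf'⟩ := exists_edge_of_deg_ne_zero h2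
        exact absurd (hbd hf.2 hf'.2 hwf hwf') (by push_neg; exact ⟨hwu, hwv⟩)
    · -- connectivity
      have claim : ∀ (g : G.E) (hg1 : g ∈ E₁), g ∈ C → ∀ {x : G.E},
          Relation.ReflTransGen (G.erel C) x g →
          (∀ hx1 : x ∈ E₁,
            Relation.ReflTransGen ((G.plus1 E₁ huv 1).erel (plift G E₁ C ∪ {Sum.inr ()}))
              (Sum.inl ⟨x, hx1⟩) (Sum.inl ⟨g, hg1⟩)) ∧
          (x ∈ E₂ →
            Relation.ReflTransGen ((G.plus1 E₁ huv 1).erel (plift G E₁ C ∪ {Sum.inr ()}))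
              (Sum.inr ()) (Sum.inl ⟨g, hg1⟩)) := by
        intro g hg1 hgC x hx
        induction hx using Relation.ReflTransGen.head_induction_on with
        | refl =>
          exact ⟨fun hx1 => Relation.ReflTransGen.refl,
            fun hx2 => absurd hg1 (Finset.disjoint_right.mp hdisj hx2)⟩
        | @head a b hstep htail ih =>
          obtain ⟨haC, hbC, w, hwa, hwb⟩ := hstep
          have hbE : b ∈ E₁ ∨ b ∈ E₂ :=
            Finset.mem_union.mp (hcover ▸ Finset.mem_univ b)
          constructor
          · intro ha1
            by_cases hb1 : b ∈ E₁
            · exact (ih.1 hb1).head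
                (show (G.plus1 E₁ huv 1).erel (plift G E₁ C ∪ {Sum.inr ()})
                    (Sum.inl ⟨a, ha1⟩) (Sum.inl ⟨b, hb1⟩) from
                  ⟨Or.inl (mem_plift_inl.mpr haC), Or.inl (mem_plift_inl.mpr hbC), w, hwa, hwb⟩)
            · have hb2 : b ∈ E₂ := hbE.resolve_left hb1
              have hw : w = u ∨ w = v := hbd ha1 hb2 hwa hwb
              exact (ih.2 hb2).head
                ⟨Or.inl (mem_plift_inl.mpr haC), Or.inr rfl, w, hwa,
                  (Sym2.mem_iff.mpr hw : w ∈ s(u, v))⟩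
          · intro ha2
            by_cases hb1 : b ∈ E₁
            · have hw : w = u ∨ w = v := hbd hb1 ha2 hwb hwa
              exact (ih.1 hb1).head
                (show (G.plus1 E₁ huv 1).erel (plift G E₁ C ∪ {Sum.inr ()})
                    (Sum.inr ()) (Sum.inl ⟨b, hb1⟩) from
                  ⟨Or.inr rfl, Or.inl (mem_plift_inl.mpr hbC), w,
                    (Sym2.mem_iff.mpr hw : w ∈ s(u, v)), hwb⟩)
            · exact ih.2 (hbE.resolve_left hb1)
      intro x hx y hy
      have hsymm : Symmetric (Relation.ReflTransGen
          ((G.plus1 E₁ huv 1).erel (plift G E₁ C ∪ {Sum.inr ()}))) := by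
        haveI : Std.Symm ((G.plus1 E₁ huv 1).erel (plift G E₁ C ∪ {Sum.inr ()})) :=
          ⟨fun _ _ h => erel_symm (H := G.plus1 E₁ huv 1) (plift G E₁ C ∪ {Sum.inr ()}) h⟩
        exact fun a b h => Std.Symm.symm a b h
      have hinr : ∀ (yy : {e : G.E // e ∈ E₁}), yy.val ∈ C →
          Relation.ReflTransGen ((G.plus1 E₁ huv 1).erel (plift G E₁ C ∪ {Sum.inr ()}))
            (Sum.inr ()) (Sum.inl yy) := by
        intro yy hyy
        obtain ⟨fu, hfu, hufu⟩ := exists_edge_of_deg_ne_zero (w := u)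
          (by rw [hd1u]; exact one_ne_zero)
        exact ((claim yy.val yy.2 hyy (hconn fu hfu.1 yy.val hyy)).1 hfu.2).head
          (show (G.plus1 E₁ huv 1).erel (plift G E₁ C ∪ {Sum.inr ()})
              (Sum.inr ()) (Sum.inl ⟨fu, hfu.2⟩) from
            ⟨Or.inr rfl, Or.inl (mem_plift_inl.mpr hfu.1), u,
              (Sym2.mem_iff.mpr (Or.inl rfl) : u ∈ s(u, v)), hufu⟩)
      rcases hx with hx | hx <;> rcases hy with hy | hy
      · obtain ⟨yx, hyx, rfl⟩ := hx
        obtain ⟨yy, hyy, rfl⟩ := hy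
        exact (claim yy.val yy.2 hyy (hconn yx.val hyx yy.val hyy)).1 yx.2
      · obtain ⟨yx, hyx, rfl⟩ := hx
        erw [Set.mem_singleton_iff] at hy
        subst hy
        exact hsymm (hinr yx hyx)
      · erw [Set.mem_singleton_iff] at hx
        subst hx
        obtain ⟨yy, hyy, rfl⟩ := hy
        exact hinr yy hyy
      · erw [Set.mem_singleton_iff] at hx hy
        subst hx; subst hy
        exact Relation.ReflTransGen.refl
    · -- sign
      erw [sign_pdown, pdown_union_inr]
      have h2 : G.signOf (C ∩ ↑E₂) = 1 :=
        signOf_eq_one (fun e he => hpos e he.2)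
      calc G.signOf (C ∩ ↑E₁) = G.signOf (C ∩ ↑E₁) * G.signOf (C ∩ ↑E₂) := by
            rw [h2, mul_one]
        _ = G.signOf ((C ∩ ↑E₁) ∪ (C ∩ ↑E₂)) := (signOf_union hdd).symm
        _ = G.signOf C := by rw [← hsplit]
    · intro e h he
      exact Or.inl ((mem_plift_inl (y := ⟨e, h⟩)).mpr he)
  · -- cycle stays in E₁
    have hC1 : C ⊆ ↑E₁ := by
      intro e he
      have h : e ∈ E₁ ∪ E₂ := hcover ▸ Finset.mem_univ e
      rcases Finset.mem_union.mp h with h | h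
      · exact h
      · exact absurd ⟨he, h⟩ (fun hmem => hCE₂ ⟨e, hmem⟩)
    obtain ⟨c0, hc0⟩ := hCne
    refine ⟨plift G E₁ C, ⟨⟨Sum.inl ⟨c0, hC1 hc0⟩, mem_plift_inl.mpr hc0⟩, ?_, ?_⟩, ?_, ?_⟩
    · intro w
      erw [deg_pdown_of_not_mem (σ := 1) (huv := huv) _ not_inr_mem_plift, pdown_plift,
        Set.inter_eq_self_of_subset_left hC1]
      exact hdeg w
    · exact conn_plift hC1 hconn
    · erw [sign_pdown, pdown_plift, Set.inter_eq_self_of_subset_left hC1]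
    · intro e h he
      exact (mem_plift_inl (y := ⟨e, h⟩)).mpr he

end SGraph
namespace SGraph

open Set

variable {G : SGraph}

lemma cycle_down {E₁ E₂ : Finset G.E} (hdisj : Disjoint E₁ E₂)
    {u v : G.V} {huv : u ≠ v}
    (hsep : G.verts ↑E₁ ∩ G.verts ↑E₂ = {u, v})
    (hpos : ∀ e ∈ E₂, G.sgn e = 1)
    {D : Set (G.plus1 E₁ huv 1).E} (hD : (G.plus1 E₁ huv 1).IsCycle D)
    (hex : Sum.inr () ∈ D)
    {P : Set G.E} (hP2 : P ⊆ (↑E₂ : Set G.E)) (hPpath : G.IsPath P u v) :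
    G.IsCycle (pdown G E₁ D ∪ P) ∧
      G.signOf (pdown G E₁ D ∪ P) = (G.plus1 E₁ huv 1).signOf D := by
  obtain ⟨hDne, hDdeg, hDconn⟩ := hD
  rcases hPpath with ⟨huv', -⟩ | ⟨-, hPne, hdPu, hdPv, hPmid, hPconn⟩
  · exact absurd huv' huv
  have hdisjCP : Disjoint (pdown G E₁ D) P := by
    rw [Set.disjoint_left]
    intro x hx hxP
    exact Finset.disjoint_left.mp hdisj (pdown_subset hx) (hP2 hxP)
  have hdDu : (G.plus1 E₁ huv 1).deg D u = 2 := by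
    rcases hDdeg u with h | h
    · exact absurd h (deg_ne_zero_of_mem hex
        (show u ∈ (G.plus1 E₁ huv 1).ends (Sum.inr ()) from Sym2.mem_iff.mpr (Or.inl rfl)))
    · exact h
  have hdDv : (G.plus1 E₁ huv 1).deg D v = 2 := by
    rcases hDdeg v with h | h
    · exact absurd h (deg_ne_zero_of_mem hex
        (show v ∈ (G.plus1 E₁ huv 1).ends (Sum.inr ()) from Sym2.mem_iff.mpr (Or.inr rfl)))
    · exact h
  have hdC0u : G.deg (pdown G E₁ D) u = 1 := by
    have h := deg_pdown_of_mem D hex u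
    rw [hdDu, if_pos (Or.inl rfl)] at h
    omega
  have hdC0v : G.deg (pdown G E₁ D) v = 1 := by
    have h := deg_pdown_of_mem D hex v
    rw [hdDv, if_pos (Or.inr rfl)] at h
    omega
  obtain ⟨pu, hpu, hupu⟩ := exists_edge_of_deg_ne_zero (w := u) (by rw [hdPu]; exact one_ne_zero)
  obtain ⟨pv, hpv, hvpv⟩ := exists_edge_of_deg_ne_zero (w := v) (by rw [hdPv]; exact one_ne_zero)
  refine ⟨⟨⟨pu, Or.inr hpu⟩, ?_, ?_⟩, ?_⟩
  · -- degrees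
    intro w
    have hu2 := deg_union (pdown G E₁ D) P hdisjCP w
    by_cases hwu : w = u
    · right; rw [hu2, hwu, hdC0u, hdPu]
    by_cases hwv : w = v
    · right; rw [hu2, hwv, hdC0v, hdPv]
    have hPw := hPmid w hwu hwv
    have hC0w : G.deg (pdown G E₁ D) w = (G.plus1 E₁ huv 1).deg D w := by
      have h := deg_pdown_of_mem D hex w
      rw [if_neg (by push_neg; exact ⟨hwu, hwv⟩)] at h
      omega
    have hDw := hDdeg w
    by_cases hz : G.deg (pdown G E₁ D) w = 0
    · rw [hu2, hz]
      simpa using hPw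
    by_cases hz2 : G.deg P w = 0
    · rw [hu2, hz2, hC0w]
      rcases hDw with h | h <;> simp [h]
    · exfalso
      obtain ⟨f, hf, hwf⟩ := exists_edge_of_deg_ne_zero hz
      obtain ⟨f', hf', hwf'⟩ := exists_edge_of_deg_ne_zero hz2
      have hmem : w ∈ G.verts ↑E₁ ∩ G.verts ↑E₂ :=
        ⟨⟨f, pdown_subset hf, hwf⟩, ⟨f', hP2 hf', hwf'⟩⟩
      rw [hsep] at hmem
      rcases (by simpa using hmem : w = u ∨ w = v) with h | h
      · exact hwu h
      · exact hwv h
  · -- connectivity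
    classical
    have hPlift : ∀ {p q}, p ∈ P → q ∈ P →
        Relation.ReflTransGen (G.erel (pdown G E₁ D ∪ P)) p q :=
      fun hp hq => Relation.ReflTransGen.mono
        (fun _ _ hr => erel_mono Set.subset_union_right hr) _ _ (hPconn _ hp _ hq)
    have hsub : ∀ a b, (G.plus1 E₁ huv 1).erel D a b →
        Relation.ReflTransGen (G.erel (pdown G E₁ D ∪ P))
          (Sum.elim Subtype.val (fun _ => pu) a) (Sum.elim Subtype.val (fun _ => pu) b) := by
      rintro a b ⟨haD, hbD, w, hwa, hwb⟩
      cases a with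
      | inl ya =>
        cases b with
        | inl yb =>
          exact Relation.ReflTransGen.single
            ⟨Or.inl ⟨ya, haD, rfl⟩, Or.inl ⟨yb, hbD, rfl⟩, w, hwa, hwb⟩
        | inr t =>
          cases t
          have hw : w = u ∨ w = v := Sym2.mem_iff.mp hwb
          show Relation.ReflTransGen _ ya.val pu
          rcases hw with hw | hw
          · exact Relation.ReflTransGen.single
              ⟨Or.inl ⟨ya, haD, rfl⟩, Or.inr hpu, u, hw ▸ hwa, hupu⟩
          · exact Relation.ReflTransGen.head
              ⟨Or.inl ⟨ya, haD, rfl⟩, Or.inr hpv, v, hw ▸ hwa, hvpv⟩ (hPlift hpv hpu)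
      | inr t =>
        cases t
        cases b with
        | inl yb =>
          have hw : w = u ∨ w = v := Sym2.mem_iff.mp hwa
          show Relation.ReflTransGen _ pu yb.val
          rcases hw with hw | hw
          · exact Relation.ReflTransGen.single
              ⟨Or.inr hpu, Or.inl ⟨yb, hbD, rfl⟩, u, hupu, hw ▸ hwb⟩
          · exact (hPlift hpu hpv).tail ⟨Or.inr hpv, Or.inl ⟨yb, hbD, rfl⟩, v, hvpv, hw ▸ hwb⟩
        | inr t' =>
          cases t'
          exact Relation.ReflTransGen.refl
    have hchain : ∀ (g : {e : G.E // e ∈ E₁}) {x : (G.plus1 E₁ huv 1).E},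
        Relation.ReflTransGen ((G.plus1 E₁ huv 1).erel D) x (Sum.inl g) →
        Relation.ReflTransGen (G.erel (pdown G E₁ D ∪ P))
          (Sum.elim Subtype.val (fun _ => pu) x) g.val := by
      intro g x hx
      induction hx using Relation.ReflTransGen.head_induction_on with
      | refl => exact Relation.ReflTransGen.refl
      | @head a b hstep htail ih => exact (hsub a b hstep).trans ih
    have hsymmG : Symmetric (Relation.ReflTransGen (G.erel (pdown G E₁ D ∪ P))) := by
      haveI : Std.Symm (G.erel (pdown G E₁ D ∪ P)) :=
        ⟨fun _ _ h => erel_symm (H := G) (pdown G E₁ D ∪ P) h⟩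
      exact fun a b h => Std.Symm.symm a b h
    obtain ⟨cu, hcuC0, hucu⟩ := exists_edge_of_deg_ne_zero (w := u)
      (by rw [hdC0u]; exact one_ne_zero)
    have hcu_step : G.erel (pdown G E₁ D ∪ P) cu pu :=
      ⟨Or.inl hcuC0, Or.inr hpu, u, hucu, hupu⟩
    intro e he f hf
    rcases he with he | he <;> rcases hf with hf | hf
    · obtain ⟨ye, hyeD, rfl⟩ := he
      obtain ⟨yf, hyfD, rfl⟩ := hf
      exact hchain yf (hDconn _ hyeD _ hyfD)
    · obtain ⟨ye, hyeD, rfl⟩ := he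
      refine Relation.ReflTransGen.trans ?_
        (Relation.ReflTransGen.head hcu_step (hPlift hpu hf))
      obtain ⟨ycu, hycuD, hval⟩ := hcuC0
      have h := hchain ycu (hDconn _ hyeD _ hycuD)
      rw [hval] at h
      exact h
    · refine hsymmG ?_
      obtain ⟨yf, hyfD, rfl⟩ := hf
      refine Relation.ReflTransGen.trans ?_
        (Relation.ReflTransGen.head hcu_step (hPlift hpu he))
      obtain ⟨ycu, hycuD, hval⟩ := hcuC0
      have h := hchain ycu (hDconn _ hyfD _ hycuD)
      rw [hval] at h
      exact h
    · exact hPlift he hf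
  · rw [signOf_union hdisjCP, signOf_eq_one (fun e he => hpos e (hP2 he)), mul_one, sign_pdown]

lemma exists_path_E2 (h2 : G.KConnected 2) {E₁ E₂ : Finset G.E}
    (hcover : E₁ ∪ E₂ = Finset.univ) {u v : G.V} (huv : u ≠ v)
    (hsep : G.verts ↑E₁ ∩ G.verts ↑E₂ = {u, v}) :
    ∃ P, P ⊆ (↑E₂ : Set G.E) ∧ G.IsPath P u v := by
  have hu2 : u ∈ G.verts ↑E₂ := by
    have h : u ∈ ({u, v} : Set G.V) := Or.inl rfl
    rw [← hsep] at h
    exact h.2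
  obtain ⟨f, hf2, huf⟩ := hu2
  obtain ⟨w, huw, hfw⟩ := exists_other f huf
  apply exists_path_of_reach
  by_cases hwv : w = v
  · subst hwv
    exact Relation.ReflTransGen.single ⟨f, hf2, hfw⟩
  · have hcon : Relation.ReflTransGen
        (fun a b => a ∉ ({u} : Set G.V) ∧ b ∉ ({u} : Set G.V) ∧ ∃ e, G.ends e = s(a, b)) w v := by
      apply h2.2 {u} (by rw [Set.ncard_singleton]; norm_num) w v
      · exact fun h => huw (Set.mem_singleton_iff.mp h).symm
      · exact fun h => huv (Set.mem_singleton_iff.mp h).symm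
    have claim : ∀ {x}, Relation.ReflTransGen
        (fun a b => a ∉ ({u} : Set G.V) ∧ b ∉ ({u} : Set G.V) ∧ ∃ e, G.ends e = s(a, b)) w x →
        (Relation.ReflTransGen (fun p q => ∃ e ∈ (↑E₂ : Set G.E), G.ends e = s(p, q)) u x ∨
         Relation.ReflTransGen (fun p q => ∃ e ∈ (↑E₂ : Set G.E), G.ends e = s(p, q)) u v) := by
      intro x hx
      induction hx with
      | refl => exact Or.inl (Relation.ReflTransGen.single ⟨f, hf2, hfw⟩)
      | @tail m y h1 hstep ih =>
        obtain ⟨hm, hy, e, he⟩ := hstep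
        rcases ih with ih | ih
        · by_cases he2 : e ∈ E₂
          · exact Or.inl (ih.tail ⟨e, he2, he⟩)
          · have hmu : m ≠ u := fun h => hm (Set.mem_singleton_iff.mpr h)
            have he1 : e ∈ E₁ := by
              rcases Finset.mem_union.mp (hcover ▸ Finset.mem_univ e) with h | h
              · exact h
              · exact absurd h he2
            rcases ih.cases_tail with heq | ⟨z, -, hz⟩
            · exact absurd heq hmu
            · obtain ⟨e', he'2, he'⟩ := hz
              have hm1 : m ∈ G.verts ↑E₁ := ⟨e, he1, by rw [he]; simp⟩
              have hm2 : m ∈ G.verts ↑E₂ := ⟨e', he'2, by rw [he']; simp⟩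
              have hmem : m ∈ ({u, v} : Set G.V) := hsep ▸ ⟨hm1, hm2⟩
              rcases hmem with h | h
              · exact absurd h hmu
              · rw [Set.mem_singleton_iff] at h
                exact Or.inr (h ▸ ih)
        · exact Or.inr ih
    rcases claim hcon with h | h
    · exact h
    · exact h

lemma cycle_down_any {E₁ E₂ : Finset G.E} (hdisj : Disjoint E₁ E₂)
    {u v : G.V} {huv : u ≠ v} (hsep : G.verts ↑E₁ ∩ G.verts ↑E₂ = {u, v})
    (hpos : ∀ e ∈ E₂, G.sgn e = 1)
    {P : Set G.E} (hP2 : P ⊆ (↑E₂ : Set G.E)) (hPpath : G.IsPath P u v)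
    {D : Set (G.plus1 E₁ huv 1).E} (hD : (G.plus1 E₁ huv 1).IsCycle D) :
    ∃ C, G.IsCycle C ∧ G.signOf C = (G.plus1 E₁ huv 1).signOf D ∧
      ∀ e (h : e ∈ E₁), Sum.inl ⟨e, h⟩ ∈ D → e ∈ C := by
  by_cases hex : Sum.inr () ∈ D
  · obtain ⟨hcyc, hsign⟩ := cycle_down hdisj hsep hpos hD hex hP2 hPpath
    exact ⟨_, hcyc, hsign, fun e h he => Or.inl (mem_pdown.mpr ⟨h, he⟩)⟩
  · refine ⟨pdown G E₁ D, ⟨?_, ?_, conn_pdown hex hD.2.2⟩, (sign_pdown D).symm, ?_⟩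
    · obtain ⟨x, hx⟩ := hD.1
      cases x with
      | inl y => exact ⟨y.val, mem_pdown.mpr ⟨y.2, hx⟩⟩
      | inr t => cases t; exact absurd hx hex
    · intro w
      rw [← deg_pdown_of_not_mem D hex w]
      exact hD.2.1 w
    · intro e h he
      exact mem_pdown.mpr ⟨h, he⟩

end SGraph

/-- Observation 2.1(2): across a 2-separation with `e₁, e₂ ∈ E(G₁)` and all edges of
`G₂` positive, `e₁, e₂` are tied in `G` iff they are tied in `G₁⁺`. -/
theorem stmt_11 (G : SGraph) (h2 : G.KConnected 2)
    (E₁ E₂ : Finset G.E) (hdisj : Disjoint E₁ E₂) (hcover : E₁ ∪ E₂ = Finset.univ)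
    (u v : G.V) (huv : u ≠ v)
    (hsep : G.verts ↑E₁ ∩ G.verts ↑E₂ = {u, v})
    (e₁ e₂ : G.E) (he₁ : e₁ ∈ E₁) (he₂ : e₂ ∈ E₁)
    (hpos : ∀ e ∈ E₂, G.sgn e = 1) :
    G.Tied e₁ e₂ ↔
      (G.plus1 E₁ huv 1).Tied (Sum.inl ⟨e₁, he₁⟩) (Sum.inl ⟨e₂, he₂⟩) := by
  obtain ⟨P, hP2, hPpath⟩ := SGraph.exists_path_E2 h2 hcover huv hsep
  constructor
  · intro hT D D' hD hD' h1 h2' h1' h2''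
    obtain ⟨C, hC, hsC, hmem⟩ := SGraph.cycle_down_any hdisj hsep hpos hP2 hPpath hD
    obtain ⟨C', hC', hsC', hmem'⟩ := SGraph.cycle_down_any hdisj hsep hpos hP2 hPpath hD'
    rw [← hsC, ← hsC']
    exact hT C C' hC hC' (hmem e₁ he₁ h1) (hmem e₂ he₂ h2') (hmem' e₁ he₁ h1') (hmem' e₂ he₂ h2'')
  · intro hT C C' hC hC' h1 h2' h1' h2''
    obtain ⟨D, hD, hsD, hmem⟩ := SGraph.cycle_up hdisj hcover huv hsep hpos hC h1 he₁
    obtain ⟨D', hD', hsD', hmem'⟩ := SGraph.cycle_up hdisj hcover huv hsep hpos hC' h1' he₁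
    rw [← hsD, ← hsD']
    exact hT D D' hD hD' (hmem e₁ he₁ h1) (hmem e₂ he₂ h2') (hmem' e₁ he₁ h1') (hmem' e₂ he₂ h2'')
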